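/- Let (ψ₀,φ₀) ∈ [0,2π]×[0,2π] satisfy F₂(ψ₀,φ₀) = 2√2/(3π) and F₁(ψ₀,φ₀) ≥ 0. Then φ₀ ≤ 3π/2 and F₁(ψ₀,φ₀) = √((2−2cos φ₀)/φ₀² − 8/(9π²)) when φ₀ > 0 (respectively F₁(ψ₀,0) = √(1−8/(9π²)) when φ₀ = 0); equivalently, F(ψ₀,φ₀) = F̃(φ₀), where F̃(φ) = (√((2−2cos φ)/φ² − 8/(9π²)), 2√2/(3π), 2(φ−sin φ)/φ²) for φ ∈ (0,3π/2] and F̃(0) = (√(1−8/(9π²)), 2√2/(3π), 0). -/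
import Mathlib


open Real

/-- The parametrization `F` of the closed upper half of the boundary of the
sub-Riemannian unit ball, with `F(ψ,0) = (cos ψ, sin ψ, 0)`. -/
noncomputable def Fmap (p : ℝ × ℝ) : ℝ × ℝ × ℝ :=
  if p.2 = 0 then (Real.cos p.1, Real.sin p.1, 0)
  else (Real.sqrt (2 - 2*Real.cos p.2)/p.2 * Real.cos p.1,
        Real.sqrt (2 - 2*Real.cos p.2)/p.2 * Real.sin p.1,
        2*(p.2 - Real.sin p.2)/p.2^2)

/-- The curve `F̃` parametrizing the part with `x ≥ 0`, `z ≥ 0` of the slice of the upper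
half-sphere by the plane `{y = 2√2/(3π)}`. -/
noncomputable def Ftilde (φ : ℝ) : ℝ × ℝ × ℝ :=
  if φ = 0 then (Real.sqrt (1 - 8/(9*π^2)), 2*Real.sqrt 2/(3*π), 0)
  else (Real.sqrt ((2 - 2*Real.cos φ)/φ^2 - 8/(9*π^2)), 2*Real.sqrt 2/(3*π),
        2*(φ - Real.sin φ)/φ^2)

lemma h8sq : (2*Real.sqrt 2/(3*π))^2 = 8/(9*π^2) := by
  rw [div_pow, mul_pow, Real.sq_sqrt (by norm_num : (0:ℝ) ≤ 2)]
  ring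

lemma g_lt (φ : ℝ) (hl : 3*π/2 < φ) (hu : φ ≤ 2*π) :
    (2 - 2*Real.cos φ)/φ^2 < 8/(9*π^2) := by
  have hπ := Real.pi_pos
  have hsq : Real.sin (φ/2)^2 = (1 - Real.cos φ)/2 := by
    have h := Real.cos_two_mul (φ/2)
    have h' := Real.sin_sq_add_cos_sq (φ/2)
    rw [show 2*(φ/2) = φ by ring] at h
    linarith
  have hs0 : 0 ≤ Real.sin (φ/2) :=
    Real.sin_nonneg_of_nonneg_of_le_pi (by linarith) (by linarith)
  have hslt : Real.sin (φ/2) < Real.sqrt 2 / 2 := by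
    have h1 : Real.cos (φ/2 - π/2) < Real.cos (π/4) := by
      apply Real.strictAntiOn_cos ⟨by linarith [Real.pi_pos], by linarith⟩
        ⟨by linarith, by linarith⟩ (by linarith)
    rw [Real.cos_pi_div_four] at h1
    calc Real.sin (φ/2) = Real.cos (φ/2 - π/2) := by
          rw [Real.cos_sub, Real.cos_pi_div_two, Real.sin_pi_div_two]; ring
      _ < _ := h1
  have hsqrt2 : (Real.sqrt 2)^2 = 2 := Real.sq_sqrt (by norm_num)
  have hs2 : Real.sin (φ/2)^2 < 1/2 := by nlinarith
  rw [div_lt_div_iff₀ (by nlinarith) (by positivity)]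
  nlinarith [sq_nonneg π]

/-- If `(ψ₀,φ₀) ∈ [0,2π]×[0,2π]` satisfies `F₂(ψ₀,φ₀) = 2√2/(3π)` and `F₁(ψ₀,φ₀) ≥ 0`,
then `φ₀ ≤ 3π/2` and `F(ψ₀,φ₀) = F̃(φ₀)`. -/
theorem Fmap_eq_Ftilde (ψ₀ φ₀ : ℝ)
    (hψ : ψ₀ ∈ Set.Icc 0 (2*π)) (hφ : φ₀ ∈ Set.Icc 0 (2*π))
    (h2 : (Fmap (ψ₀, φ₀)).2.1 = 2*Real.sqrt 2/(3*π))
    (h1 : 0 ≤ (Fmap (ψ₀, φ₀)).1) :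
    φ₀ ≤ 3*π/2 ∧ Fmap (ψ₀, φ₀) = Ftilde φ₀ := by
  have hπ := Real.pi_pos
  have hc : (0:ℝ) < 2*Real.sqrt 2/(3*π) := by positivity
  by_cases h0 : φ₀ = 0
  · subst h0
    simp only [Fmap, Ftilde, if_pos] at h2 h1 ⊢
    norm_num at h2 h1 ⊢
    refine ⟨by linarith, ?_⟩
    have hpyth := Real.sin_sq_add_cos_sq ψ₀
    have hcsq : Real.cos ψ₀ ^ 2 = 1 - 8/(9*π^2) := by
      rw [← h8sq, ← h2]; nlinarith
    have hcos : Real.cos ψ₀ = Real.sqrt (1 - 8/(9*π^2)) := by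
      rw [← hcsq, Real.sqrt_sq h1]
    exact ⟨hcos, h2⟩
  · have hpos : 0 < φ₀ := lt_of_le_of_ne hφ.1 (Ne.symm h0)
    simp only [Fmap, Ftilde, if_neg h0] at h2 h1 ⊢
    set r := Real.sqrt (2 - 2*Real.cos φ₀) / φ₀ with hr
    have hcosle : 2 - 2*Real.cos φ₀ ≥ 0 := by nlinarith [Real.cos_le_one φ₀]
    have hrnn : 0 ≤ r := by positivity
    have hr2 : r^2 = (2 - 2*Real.cos φ₀)/φ₀^2 := by
      rw [hr, div_pow, Real.sq_sqrt hcosle]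
    have hcr : 2*Real.sqrt 2/(3*π) ≤ r := by
      calc 2*Real.sqrt 2/(3*π) = r * Real.sin ψ₀ := h2.symm
        _ ≤ r * 1 := by
            apply mul_le_mul_of_nonneg_left (Real.sin_le_one ψ₀) hrnn
        _ = r := mul_one r
    have hc2r2 : 8/(9*π^2) ≤ (2 - 2*Real.cos φ₀)/φ₀^2 := by
      rw [← hr2, ← h8sq]
      exact pow_le_pow_left₀ hc.le hcr 2
    have hle : φ₀ ≤ 3*π/2 := by
      by_contra hlt
      exact absurd hc2r2 (not_le.mpr (g_lt φ₀ (not_le.mp hlt) hφ.2))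
    refine ⟨hle, ?_⟩
    have hF1sq : (r * Real.cos ψ₀)^2 = (2 - 2*Real.cos φ₀)/φ₀^2 - 8/(9*π^2) := by
      have hpyth := Real.sin_sq_add_cos_sq ψ₀
      rw [← hr2, ← h8sq, ← h2]
      nlinarith
    have hF1 : r * Real.cos ψ₀ = Real.sqrt ((2 - 2*Real.cos φ₀)/φ₀^2 - 8/(9*π^2)) := by
      rw [← hF1sq, Real.sqrt_sq h1]
    simp only [Prod.mk.injEq]
    exact ⟨hF1, h2, trivial⟩
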